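/- arXiv:2205.12801 — 2 statements merged into one kernel-verified Lean document; each statement's English description precedes it below -/
import Mathlib

section
/- Let (a_n)_{n≥1} be a sequence of integers, let x₀ ∈ ℝ, and define the forward orbit x_0 = x₀, x_{n+1} = (x_n)⁻¹ − a_{n+1} (viewing each a_n as a real number). Suppose that for every n ≥ 0 one has x_n ≠ 0 and |x_n| < 1. Then the sequence of convergents c_n = P[a_1,…,a_n]·(Q[a_1,…,a_n])⁻¹ tends to x₀ as n → ∞. -/
open Filter

/-- `(P l, Q l)` for a digit list `l = [a_i, …, a_n]`:
`P [] = 0`, `Q [] = 1`, `P (a :: l) = Q l`, `Q (a :: l) = a * Q l + P l`. -/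
def cfPQ {k : Type*} [DivisionRing k] : List k → k × k
  | [] => (0, 1)
  | a :: l => ((cfPQ l).2, a * (cfPQ l).2 + (cfPQ l).1)

/-- The digit list `[a_i, a_{i+1}, …, a_n]`. -/
def suffList {k : Type*} (a : ℕ → k) (i n : ℕ) : List k :=
  (List.range (n + 1 - i)).map (fun j => a (i + j))

def cfPQ' : List ℝ → ℝ × ℝ
  | [] => (1, 0)
  | a :: l => ((cfPQ' l).2, a * (cfPQ' l).2 + (cfPQ' l).1)

lemma cfPQ'_append (l : List ℝ) (b : ℝ) : cfPQ' (l ++ [b]) = cfPQ l := by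
  induction l with
  | nil => simp [cfPQ', cfPQ]
  | cons a l ih => simp [cfPQ', cfPQ, ih]

lemma cfPQ_append (l : List ℝ) (b : ℝ) :
    cfPQ (l ++ [b]) = ((cfPQ' l).1 + (cfPQ l).1 * b, (cfPQ' l).2 + (cfPQ l).2 * b) := by
  induction l with
  | nil => simp [cfPQ', cfPQ]
  | cons a l ih => simp [cfPQ, cfPQ', ih, Prod.ext_iff]; ring

def cfPQZ : List ℤ → ℤ × ℤ
  | [] => (0, 1)
  | a :: l => ((cfPQZ l).2, a * (cfPQZ l).2 + (cfPQZ l).1)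

lemma cfPQ_intCast (l : List ℤ) :
    cfPQ (List.map (Int.cast : ℤ → ℝ) l) = (((cfPQZ l).1 : ℝ), ((cfPQZ l).2 : ℝ)) := by
  induction l with
  | nil => simp [cfPQ, cfPQZ]
  | cons a l ih => simp [cfPQ, cfPQZ, ih]

lemma suffList_zero {k : Type*} (a : ℕ → k) : suffList a 1 0 = [] := by
  simp [suffList]

lemma suffList_succ {k : Type*} (a : ℕ → k) (n : ℕ) :
    suffList a 1 (n + 1) = suffList a 1 n ++ [a (n + 1)] := by
  have h : n + 1 + 1 - 1 = n + 1 := by omega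
  have h2 : n + 1 - 1 = n := by omega
  simp [suffList, h, h2, List.range_succ, Nat.add_comm]

lemma suffList_map (a : ℕ → ℤ) (i n : ℕ) :
    suffList (fun j => ((a j : ℤ) : ℝ)) i n = List.map (Int.cast : ℤ → ℝ) (suffList a i n) := by
  simp only [suffList, List.map_map]
  rfl

-- u = x n, v = x (n+1), A = a (n+1);  u*v = 1 - A*u
lemma digit_pos_bound (u v : ℝ) (A : ℤ) (hu0 : u ≠ 0) (hu : |u| < 1) (hv : |v| < 1)
    (hrel : u * v = 1 - (A : ℝ) * u) (hp : 0 < u * v) : u * v ≤ 1 - |u| := by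
  have huv : |u * v| < |u| := by
    rw [abs_mul]
    have h0 : 0 < |u| := abs_pos.mpr hu0
    nlinarith [abs_nonneg v]
  have hA : (A : ℝ) * u = 1 - u * v := by linarith
  have hApos : 0 < (A : ℝ) * u := by
    have : u * v < 1 := lt_of_le_of_lt (le_of_lt (lt_of_abs_lt huv)) hu
    nlinarith
  have hAne : A ≠ 0 := by
    rintro rfl; simp at hApos
  have h1A : (1 : ℝ) ≤ |(A : ℝ)| := by
    have := Int.one_le_abs hAne
    calc (1:ℝ) = ((1:ℤ):ℝ) := by norm_num
    _ ≤ ((|A| : ℤ) : ℝ) := by exact_mod_cast this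
    _ = |(A : ℝ)| := by push_cast; rfl
  have : |u| ≤ (A : ℝ) * u := by
    calc |u| = 1 * |u| := (one_mul _).symm
    _ ≤ |(A : ℝ)| * |u| := by
        apply mul_le_mul_of_nonneg_right h1A (abs_nonneg u)
    _ = |(A : ℝ) * u| := (abs_mul _ _).symm
    _ = (A : ℝ) * u := abs_of_pos hApos
  linarith

lemma digit_neg_facts (u v : ℝ) (A : ℤ) (hu0 : u ≠ 0) (hv0 : v ≠ 0) (hu : |u| < 1) (hv : |v| < 1)
    (hrel : u * v = 1 - (A : ℝ) * u) (hp : u * v < 0) :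
    |(A : ℝ)| * |u| = 1 + |u| * |v| ∧ (2 : ℝ) ≤ |(A : ℝ)| := by
  have hA : (A : ℝ) * u = 1 - u * v := by linarith
  have hApos : (1 : ℝ) < (A : ℝ) * u := by nlinarith
  have h1 : |(A : ℝ)| * |u| = 1 + |u| * |v| := by
    rw [← abs_mul, abs_of_pos (by linarith : (0:ℝ) < (A:ℝ)*u), hA, ← abs_mul,
      abs_of_neg hp]
    ring
  refine ⟨h1, ?_⟩
  have hu1 : 0 < |u| := abs_pos.mpr hu0
  have : (1 : ℝ) < |(A : ℝ)| := by nlinarith [abs_nonneg v]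
  have h2 : (1 : ℤ) < |A| := by exact_mod_cast (by push_cast; exact this : ((1:ℤ):ℝ) < ((|A|:ℤ):ℝ))
  have : (2 : ℤ) ≤ |A| := by omega
  calc (2:ℝ) = ((2:ℤ):ℝ) := by norm_num
  _ ≤ ((|A| : ℤ) : ℝ) := by exact_mod_cast this
  _ = |(A : ℝ)| := by push_cast; rfl

lemma digit_neg_bound (u v : ℝ) (A : ℤ) (hu0 : u ≠ 0) (hv0 : v ≠ 0) (hu : |u| < 1) (hv : |v| < 1)
    (hrel : u * v = 1 - (A : ℝ) * u) (hp : u * v < 0) : |u| * (2 - |v|) ≤ 1 := by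
  obtain ⟨h1, h2⟩ := digit_neg_facts u v A hu0 hv0 hu hv hrel hp
  have hu1 : 0 < |u| := abs_pos.mpr hu0
  nlinarith

lemma digit_dich (u v : ℝ) (A : ℤ) (hu0 : u ≠ 0) (hv0 : v ≠ 0) (hu : |u| < 1) (hv : |v| < 1)
    (hrel : u * v = 1 - (A : ℝ) * u) : |v| ≤ |u| ∨ |u * v| ≤ 1 / 2 := by
  by_cases h : |u| ≤ 1 / 2
  · right
    rw [abs_mul]
    nlinarith [abs_nonneg u, abs_nonneg v]
  · push_neg at h
    rcases lt_trichotomy (u * v) 0 with hneg | hz | hpos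
    · left
      obtain ⟨h1, h2⟩ := digit_neg_facts u v A hu0 hv0 hu hv hrel hneg
      -- |A| < 3 hence |A| = 2, then |u||v| = 2|u| - 1 ≤ u², so |v| ≤ |u|
      have h3 : |(A : ℝ)| * |u| < 1 + |u| := by nlinarith [abs_pos.mpr hu0]
      have h4 : |(A : ℝ)| < 3 := by nlinarith [abs_pos.mpr hu0]
      have hA2 : |(A : ℝ)| = 2 := by
        have ha : ((|A| : ℤ) : ℝ) = |(A : ℝ)| := by push_cast; rfl
        have l1 : (2 : ℤ) ≤ |A| := by exact_mod_cast (ha ▸ h2 : ((2:ℤ):ℝ) ≤ ((|A|:ℤ):ℝ))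
        have l2 : (|A| : ℤ) < 3 := by exact_mod_cast (ha ▸ h4 : ((|A|:ℤ):ℝ) < ((3:ℤ):ℝ))
        rw [← ha]; norm_cast; omega
      rw [hA2] at h1
      have hu1 : 0 < |u| := abs_pos.mpr hu0
      nlinarith [sq_nonneg (|u| - 1)]
    · exact absurd hz (mul_ne_zero hu0 hv0)
    · right
      have := digit_pos_bound u v A hu0 hu hv hrel hpos
      rw [abs_of_pos hpos]
      linarith

lemma inv_step (g u v : ℝ) (A : ℤ) (hu0 : u ≠ 0) (hv0 : v ≠ 0) (hu : |u| < 1) (hv : |v| < 1)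
    (hrel : u * v = 1 - (A : ℝ) * u) (hg0 : 0 < g) (hg1 : g < (1 - |u|)⁻¹) :
    0 < 1 - u * v * g ∧ 1 - u * v * g < (1 - |v|)⁻¹ := by
  have hs0 : 0 < |u| := abs_pos.mpr hu0
  have ht0 : 0 < |v| := abs_pos.mpr hv0
  have hs1 : 0 < 1 - |u| := by linarith
  have ht1 : 0 < 1 - |v| := by linarith
  have hg1' : g * (1 - |u|) < 1 := by
    rw [show (1 - |u|)⁻¹ = 1 / (1 - |u|) by ring] at hg1
    exact (lt_div_iff₀ hs1).mp hg1
  have hinv1 : (1 : ℝ) < (1 - |v|)⁻¹ := by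
    rw [show (1 - |v|)⁻¹ = 1 / (1 - |v|) by ring]
    rw [lt_div_iff₀ ht1]; linarith
  rcases lt_trichotomy (u * v) 0 with hneg | hz | hpos
  · constructor
    · nlinarith
    · have key := digit_neg_bound u v A hu0 hv0 hu hv hrel hneg
      have habs : u * v = -(|u| * |v|) := by
        rw [← abs_mul, abs_of_neg hneg]; ring
      rw [habs]
      rw [show (1 - |v|)⁻¹ = 1 / (1 - |v|) by ring, lt_div_iff₀ ht1]
      -- goal : (1 + |u|*|v|*g) * (1 - |v|) < 1
      have hint2 : |v| * (|u| * (2 - |v|)) ≤ |v| * 1 :=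
        mul_le_mul_of_nonneg_left key ht0.le
      have hint3 : |u| * |v| * (1 - |v|) * g ≤ |v| * (1 - |u|) * g := by
        apply mul_le_mul_of_nonneg_right _ hg0.le
        nlinarith
      have hint4 : |v| * (g * (1 - |u|)) < |v| * 1 :=
        mul_lt_mul_of_pos_left hg1' ht0
      nlinarith
  · exact absurd hz (mul_ne_zero hu0 hv0)
  · have key := digit_pos_bound u v A hu0 hu hv hrel hpos
    have h1 : u * v * g < 1 := by
      calc u * v * g < u * v * (1 - |u|)⁻¹ := by
            exact mul_lt_mul_of_pos_left hg1 hpos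
      _ ≤ (1 - |u|) * (1 - |u|)⁻¹ := by
            apply mul_le_mul_of_nonneg_right key (by positivity)
      _ = 1 := mul_inv_cancel₀ (ne_of_gt hs1)
    constructor
    · linarith
    · have : 0 < u * v * g := mul_pos hpos hg0
      linarith

/-- Theorem 1.2 of the paper for `k = ℝ`, with integer digits. -/
theorem real_cf_convergence (a : ℕ → ℤ)
    (x₀ : ℝ) (x : ℕ → ℝ) (hx0 : x 0 = x₀)
    (hstep : ∀ n, x (n + 1) = (x n)⁻¹ - (a (n + 1) : ℝ))
    (hne : ∀ n, x n ≠ 0) (hlt : ∀ n, |x n| < 1) :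
    Tendsto
      (fun n => (cfPQ (suffList (fun i => (a i : ℝ)) 1 n)).1 *
        ((cfPQ (suffList (fun i => (a i : ℝ)) 1 n)).2)⁻¹)
      atTop (nhds x₀) := by
  set P : ℕ → ℝ := fun n => (cfPQ (suffList (fun i => (a i : ℝ)) 1 n)).1 with hPdef
  set Q : ℕ → ℝ := fun n => (cfPQ (suffList (fun i => (a i : ℝ)) 1 n)).2 with hQdef
  have hQcast : ∀ n, Q n = ((cfPQZ (suffList a 1 n)).2 : ℝ) := by
    intro n
    rw [hQdef]
    simp only
    rw [suffList_map a 1 n, cfPQ_intCast]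
  have hP0 : P 0 = 0 := by rw [hPdef]; simp [suffList_zero, cfPQ]
  have hQ0 : Q 0 = 1 := by rw [hQdef]; simp [suffList_zero, cfPQ]
  have hP1 : P 1 = 1 := by
    rw [hPdef]; simp only [suffList_succ, suffList_zero, List.nil_append]; simp [cfPQ]
  have hQ1 : Q 1 = (a 1 : ℝ) := by
    rw [hQdef]; simp only [suffList_succ, suffList_zero, List.nil_append]; simp [cfPQ]
  have hPrec : ∀ n, P (n + 2) = P n + P (n + 1) * (a (n + 2) : ℝ) := by
    intro n
    simp only [hPdef]
    rw [suffList_succ (fun i => (a i : ℝ)) (n + 1), cfPQ_append,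
      suffList_succ (fun i => (a i : ℝ)) n, cfPQ'_append]
  have hQrec : ∀ n, Q (n + 2) = Q n + Q (n + 1) * (a (n + 2) : ℝ) := by
    intro n
    simp only [hQdef]
    rw [suffList_succ (fun i => (a i : ℝ)) (n + 1), cfPQ_append,
      suffList_succ (fun i => (a i : ℝ)) n, cfPQ'_append]
  have hprod : ∀ n, x n * x (n + 1) = 1 - ((a (n + 1) : ℤ) : ℝ) * x n := by
    intro n
    rw [hstep n, mul_sub, mul_inv_cancel₀ (hne n)]
    ring
  have hg : ∀ n, Q (n + 1) * ∏ i ∈ Finset.range (n + 1), x i =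
      1 - x n * x (n + 1) * (Q n * ∏ i ∈ Finset.range n, x i) := by
    intro n
    induction n with
    | zero =>
      rw [hQ1, hQ0, Finset.prod_range_one, Finset.prod_range_zero]
      linear_combination hprod 0
    | succ n ih =>
      rw [hQrec n, Finset.prod_range_succ (fun i => x i) (n + 1)]
      linear_combination (Q (n + 1) * ∏ i ∈ Finset.range (n + 1), x i) * hprod (n + 1) + ih
        + (Q n * x (n + 1)) * Finset.prod_range_succ (fun i => x i) n
  have hInv : ∀ n, 0 < Q n * ∏ i ∈ Finset.range n, x i ∧
      Q n * ∏ i ∈ Finset.range n, x i < (1 - |x n|)⁻¹ := by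
    intro n
    induction n with
    | zero =>
      rw [hQ0, Finset.prod_range_zero]
      constructor
      · norm_num
      · rw [mul_one, show (1 - |x 0|)⁻¹ = 1 / (1 - |x 0|) by ring, lt_div_iff₀]
        · nlinarith [abs_pos.mpr (hne 0)]
        · linarith [hlt 0]
    | succ n ih =>
      rw [hg n]
      exact inv_step _ _ _ (a (n + 1)) (hne n) (hne (n + 1)) (hlt n) (hlt (n + 1))
        (hprod n) ih.1 ih.2
  have hQne : ∀ n, Q n ≠ 0 := by
    intro n h
    have h2 := (hInv n).1
    rw [h, zero_mul] at h2
    exact lt_irrefl _ h2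
  have hQabs : ∀ n, (1 : ℝ) ≤ |Q n| := by
    intro n
    have h0 : (cfPQZ (suffList a 1 n)).2 ≠ 0 := by
      intro h
      apply hQne n
      rw [hQcast n, h]
      norm_num
    have h1 := Int.one_le_abs h0
    rw [hQcast n]
    calc (1 : ℝ) = ((1 : ℤ) : ℝ) := by norm_num
    _ ≤ ((|(cfPQZ (suffList a 1 n)).2| : ℤ) : ℝ) := by exact_mod_cast h1
    _ = |((cfPQZ (suffList a 1 n)).2 : ℝ)| := by push_cast; rfl
  have hE : ∀ n, Q (n + 1) * x₀ - P (n + 1) = -(x (n + 1)) * (Q n * x₀ - P n) := by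
    intro n
    induction n with
    | zero =>
      rw [hQ1, hP1, hQ0, hP0, ← hx0]
      linear_combination hprod 0
    | succ n ih =>
      rw [hQrec n, hPrec n]
      apply mul_left_cancel₀ (hne (n + 1))
      linear_combination ih + (Q (n + 1) * x₀ - P (n + 1)) * hprod (n + 1)
  have habsE : ∀ n, |Q n * x₀ - P n| = ∏ i ∈ Finset.range (n + 1), |x i| := by
    intro n
    induction n with
    | zero =>
      rw [hQ0, hP0, ← hx0, Finset.prod_range_one, one_mul, sub_zero]
    | succ n ih =>
      rw [hE n, abs_mul, abs_neg, ih,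
        show (∏ i ∈ Finset.range (n + 2), |x i|)
            = (∏ i ∈ Finset.range (n + 1), |x i|) * |x (n + 1)| from
          Finset.prod_range_succ _ _]
      ring
  have hrpos : ∀ n, 0 < ∏ i ∈ Finset.range n, |x i| :=
    fun n => Finset.prod_pos fun i _ => abs_pos.mpr (hne i)
  have hranti : Antitone fun n => ∏ i ∈ Finset.range n, |x i| := by
    apply antitone_nat_of_succ_le
    intro n
    rw [Finset.prod_range_succ]
    nlinarith [hrpos n, hlt n, abs_nonneg (x n)]
  have hbdd : BddBelow (Set.range fun n => ∏ i ∈ Finset.range n, |x i|) := by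
    refine ⟨0, ?_⟩
    rintro y ⟨n, rfl⟩
    exact (hrpos n).le
  have hlim : Tendsto (fun n => ∏ i ∈ Finset.range n, |x i|) atTop
      (nhds (⨅ n, ∏ i ∈ Finset.range n, |x i|)) := tendsto_atTop_ciInf hranti hbdd
  set L := ⨅ n, ∏ i ∈ Finset.range n, |x i| with hLdef
  have hL0 : 0 ≤ L := le_ciInf fun n => (hrpos n).le
  have hLzero : L = 0 := by
    by_contra hL
    have hLpos : 0 < L := lt_of_le_of_ne hL0 (Ne.symm hL)
    have hshift : Tendsto (fun n => ∏ i ∈ Finset.range (n + 1), |x i|) atTop (nhds L) :=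
      hlim.comp (tendsto_add_atTop_nat 1)
    have hxlim : Tendsto (fun n => |x n|) atTop (nhds 1) := by
      have hdiv := hshift.div hlim (ne_of_gt hLpos)
      rw [div_self (ne_of_gt hLpos)] at hdiv
      have heq : (fun n => |x n|) = fun n =>
          (∏ i ∈ Finset.range (n + 1), |x i|) / ∏ i ∈ Finset.range n, |x i| := by
        funext n
        rw [Finset.prod_range_succ, mul_comm, mul_div_assoc,
          div_self (ne_of_gt (hrpos n)), mul_one]
      rw [heq]
      exact hdiv
    have hev : ∀ᶠ n in atTop, 3 / 4 < |x n| :=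
      hxlim.eventually (eventually_gt_nhds (by norm_num))
    obtain ⟨N, hN⟩ := eventually_atTop.mp hev
    have hdec : ∀ k, |x (N + k)| ≤ |x N| := by
      intro k
      induction k with
      | zero => simp
      | succ k ihk =>
        have h1 : 3 / 4 < |x (N + k)| := hN _ (Nat.le_add_right N k)
        have h2 : 3 / 4 < |x (N + k + 1)| := hN _ (by omega)
        rcases digit_dich (x (N + k)) (x (N + k + 1)) (a (N + k + 1)) (hne _) (hne _)
            (hlt _) (hlt _) (hprod (N + k)) with h | h
        · exact le_trans h ihk
        · exfalso
          rw [abs_mul] at h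
          nlinarith
    have hle : ∀ᶠ n in atTop, |x n| ≤ |x N| := by
      rw [eventually_atTop]
      refine ⟨N, fun n hn => ?_⟩
      obtain ⟨k, rfl⟩ := Nat.exists_eq_add_of_le hn
      exact hdec k
    have h1N := le_of_tendsto hxlim hle
    exact absurd (hlt N) (not_lt.mpr h1N)
  rw [hLzero] at hlim
  have hbound : ∀ n, |P n * (Q n)⁻¹ - x₀| ≤ ∏ i ∈ Finset.range (n + 1), |x i| := by
    intro n
    have h1 : P n * (Q n)⁻¹ - x₀ = -((Q n * x₀ - P n) / Q n) := by
      field_simp [hQne n]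
      ring
    rw [h1, abs_neg, abs_div, ← habsE n]
    exact div_le_self (abs_nonneg _) (hQabs n)
  have hsq : Tendsto (fun n => |P n * (Q n)⁻¹ - x₀|) atTop (nhds 0) :=
    squeeze_zero (fun n => abs_nonneg _) hbound (hlim.comp (tendsto_add_atTop_nat 1))
  rw [← tendsto_sub_nhds_zero_iff]
  exact (tendsto_zero_iff_abs_tendsto_zero _).mpr hsq
end

section
/- Let ℍ be the real quaternions and Z a discrete subring of ℍ (a subring that is a discrete subset in the norm topology). Let (a_n)_{n≥1} be a sequence with a_n ∈ Z, let x₀ ∈ ℍ, define the forward orbit x_0 = x₀, x_{n+1} = (x_n)⁻¹ − a_{n+1}, and suppose x_n ≠ 0 and ‖x_n‖ < 1 for all n ≥ 0. Then for every n ≥ 1: Q[a_i,…,a_n] ≠ 0 for all 1 ≤ i ≤ n, and ∏_{i=0}^{n−1} ‖P[a_{i+1},…,a_n]·(Q[a_{i+1},…,a_n])⁻¹‖ = ‖Q[a_1,…,a_n]‖⁻¹ ≤ 1; in particular this product is uniformly bounded above over all n. -/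
section Aux

variable {K : Type*} [DivisionRing K]

lemma cfPQ_cons (a : K) (l : List K) :
    cfPQ (a :: l) = ((cfPQ l).2, a * (cfPQ l).2 + (cfPQ l).1) := rfl

/-- forward continuant matrix -/
def cfN : List K → Matrix (Fin 2) (Fin 2) K
  | [] => 1
  | a :: l => !![0, 1; 1, a] * cfN l

/-- inverse continuant matrix -/
def cfR : List K → Matrix (Fin 2) (Fin 2) K
  | [] => 1
  | a :: l => cfR l * !![-a, 1; 1, 0]

lemma cfN_mul_cfR (l : List K) : cfN l * cfR l = 1 := by
  induction l with
  | nil => simp [cfN, cfR]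
  | cons a l ih =>
    show (!![0, 1; 1, a] * cfN l) * (cfR l * !![-a, 1; 1, 0]) = 1
    rw [mul_assoc, ← mul_assoc (cfN l), ih, one_mul, Matrix.mul_fin_two]
    ext i j
    fin_cases i <;> fin_cases j <;> simp

lemma cfN_entries (l : List K) (h : l ≠ []) :
    cfN l = !![(cfPQ l.dropLast).1, (cfPQ l).1; (cfPQ l.dropLast).2, (cfPQ l).2] := by
  induction l with
  | nil => exact absurd rfl h
  | cons a l ih =>
    cases l with
    | nil =>
      show !![0, 1; 1, a] * 1 = _
      rw [mul_one]
      simp [cfPQ]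
    | cons b l' =>
      show !![0, 1; 1, a] * cfN (b :: l') = _
      rw [ih (by simp), Matrix.mul_fin_two]
      have hd : (a :: b :: l').dropLast = a :: (b :: l').dropLast := rfl
      rw [hd, cfPQ_cons a ((b :: l').dropLast), cfPQ_cons a (b :: l')]
      ext i j
      fin_cases i <;> fin_cases j <;> simp [add_comm]

lemma cfPQ_mem (S : Subring K) (l : List K) (h : ∀ b ∈ l, b ∈ S) :
    (cfPQ l).1 ∈ S ∧ (cfPQ l).2 ∈ S := by
  induction l with
  | nil => exact ⟨S.zero_mem, S.one_mem⟩
  | cons a l ih =>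
    have h' := ih (fun b hb => h b (List.mem_cons_of_mem a hb))
    exact ⟨h'.2, S.add_mem (S.mul_mem (h a (List.mem_cons_self)) h'.2) h'.1⟩

lemma cfR_mem (S : Subring K) (l : List K) (h : ∀ b ∈ l, b ∈ S) (i j : Fin 2) :
    cfR l i j ∈ S := by
  induction l generalizing i j with
  | nil =>
    show (1 : Matrix (Fin 2) (Fin 2) K) i j ∈ S
    rw [Matrix.one_apply]
    split <;> simp [S.one_mem, S.zero_mem]
  | cons a l ih =>
    show (cfR l * !![-a, 1; 1, 0]) i j ∈ S
    rw [Matrix.mul_apply, Fin.sum_univ_two]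
    have ha : a ∈ S := h a (List.mem_cons_self)
    have h' : ∀ b ∈ l, b ∈ S := fun b hb => h b (List.mem_cons_of_mem a hb)
    have hM : ∀ p q : Fin 2, (!![-a, 1; 1, 0] : Matrix (Fin 2) (Fin 2) K) p q ∈ S := by
      intro p q
      fin_cases p <;> fin_cases q <;> simp [S.neg_mem ha, S.one_mem, S.zero_mem]
    exact S.add_mem (S.mul_mem (ih h' i 0) (hM 0 j)) (S.mul_mem (ih h' i 1) (hM 1 j))

lemma suffList_cons (a : ℕ → K) {i n : ℕ} (h : i ≤ n) :
    suffList a i n = a i :: suffList a (i + 1) n := by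
  unfold suffList
  have h1 : n + 1 - i = (n - i) + 1 := by omega
  have h2 : n + 1 - (i + 1) = n - i := by omega
  rw [h1, h2, List.range_succ_eq_map, List.map_cons, List.map_map]
  refine congrArg₂ _ (by simp) ?_
  apply List.map_congr_left
  intro j _
  show a (i + (j + 1)) = a (i + 1 + j)
  congr 1
  omega

lemma suffList_nil (a : ℕ → K) {i n : ℕ} (h : n < i) : suffList a i n = [] := by
  unfold suffList
  have h0 : n + 1 - i = 0 := by omega
  rw [h0]
  rfl

lemma dropLast_range (n : ℕ) : (List.range n).dropLast = List.range (n - 1) := by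
  cases n with
  | zero => rfl
  | succ m => rw [List.range_succ, List.dropLast_concat]; simp

lemma dropLast_suffList (a : ℕ → K) (i m : ℕ) :
    (suffList a i (m + 1)).dropLast = suffList a i m := by
  unfold suffList
  rw [← List.map_dropLast, dropLast_range]
  have : m + 1 + 1 - i - 1 = m + 1 - i := by omega
  rw [this]

end Aux

section Quat

local notation "ℍ" => Quaternion ℝ

/-- In a discrete subring, nonzero elements have norm at least 1. -/
lemma discrete_norm_ge_one (Z : Subring ℍ) (hZdisc : DiscreteTopology Z)
    {z : ℍ} (hz : z ∈ Z) (h0 : z ≠ 0) : 1 ≤ ‖z‖ := by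
  by_contra hlt
  push_neg at hlt
  have hopen : IsOpen ({0} : Set Z) := isOpen_discrete _
  rw [Metric.isOpen_iff] at hopen
  obtain ⟨ε, hε, hball⟩ := hopen 0 rfl
  obtain ⟨k, hk⟩ := exists_pow_lt_of_lt_one hε hlt
  have hmem : ((⟨z, hz⟩ : Z) ^ k : Z) ∈ Metric.ball (0 : Z) ε := by
    rw [Metric.mem_ball, Subtype.dist_eq]
    push_cast
    rw [dist_zero_right, norm_pow]
    exact hk
  have := hball hmem
  rw [Set.mem_singleton_iff] at this
  have hzk : z ^ k = 0 := by
    have := congrArg (Subtype.val) this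
    push_cast at this
    exact this
  exact pow_ne_zero k h0 hzk

variable (a : ℕ → ℍ) (x : ℕ → ℍ)
variable (hstep : ∀ n, x (n + 1) = (x n)⁻¹ - a (n + 1))
variable (hne : ∀ n, x n ≠ 0) (hlt : ∀ n, ‖x n‖ < 1)

include hstep hne hlt in
/-- The key exact identity: for `1 ≤ i ≤ m+1`,
`Q(i,m)·x_{m+1} + Q(i,m+1) = c` and `P(i,m)·x_{m+1} + P(i,m+1) = x_{i-1}·c`
with `‖c‖ > 1`. -/
lemma key_identity : ∀ (d i' m : ℕ), m = i' + d → ∃ c : ℍ,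
    (cfPQ (suffList a (i' + 1) m)).2 * x (m + 1) + (cfPQ (suffList a (i' + 1) (m + 1))).2 = c ∧
    (cfPQ (suffList a (i' + 1) m)).1 * x (m + 1) + (cfPQ (suffList a (i' + 1) (m + 1))).1
      = x i' * c ∧
    1 < ‖c‖ := by
  intro d
  induction d with
  | zero =>
    intro i' m hm
    rw [hm, Nat.add_zero]
    refine ⟨(x i')⁻¹, ?_, ?_, ?_⟩
    · rw [suffList_nil a (by omega), suffList_cons a (le_refl (i' + 1)),
        suffList_nil a (by omega)]
      show (1 : ℍ) * x (i' + 1) + (a (i' + 1) * 1 + 0) = (x i')⁻¹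
      rw [hstep i']
      noncomm_ring
    · rw [suffList_nil a (by omega), suffList_cons a (le_refl (i' + 1)),
        suffList_nil a (by omega)]
      show (0 : ℍ) * x (i' + 1) + 1 = x i' * (x i')⁻¹
      rw [mul_inv_cancel₀ (hne i')]
      noncomm_ring
    · rw [norm_inv]
      rw [one_lt_inv_iff₀]
      exact ⟨norm_pos_iff.mpr (hne i'), hlt i'⟩
  | succ d ih =>
    intro i' m hm
    obtain ⟨c', h1, h2, hc'⟩ := ih (i' + 1) m (by omega)
    refine ⟨(x i')⁻¹ * c', ?_, ?_, ?_⟩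
    · rw [suffList_cons a (show i' + 1 ≤ m by omega),
        suffList_cons a (show i' + 1 ≤ m + 1 by omega), cfPQ_cons, cfPQ_cons]
      dsimp only
      have expand :
          (a (i' + 1) * (cfPQ (suffList a (i' + 1 + 1) m)).2
              + (cfPQ (suffList a (i' + 1 + 1) m)).1) * x (m + 1)
            + (a (i' + 1) * (cfPQ (suffList a (i' + 1 + 1) (m + 1))).2
              + (cfPQ (suffList a (i' + 1 + 1) (m + 1))).1)
          = a (i' + 1) * ((cfPQ (suffList a (i' + 1 + 1) m)).2 * x (m + 1)
              + (cfPQ (suffList a (i' + 1 + 1) (m + 1))).2)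
            + ((cfPQ (suffList a (i' + 1 + 1) m)).1 * x (m + 1)
              + (cfPQ (suffList a (i' + 1 + 1) (m + 1))).1) := by noncomm_ring
      rw [expand, h1, h2]
      have : a (i' + 1) * c' + x (i' + 1) * c' = (a (i' + 1) + x (i' + 1)) * c' := by
        noncomm_ring
      rw [this]
      congr 1
      rw [hstep i']
      noncomm_ring
    · rw [suffList_cons a (show i' + 1 ≤ m by omega),
        suffList_cons a (show i' + 1 ≤ m + 1 by omega), cfPQ_cons, cfPQ_cons]
      dsimp only
      rw [h1, ← mul_assoc, mul_inv_cancel₀ (hne i'), one_mul]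
    · rw [norm_mul, norm_inv]
      have h1' : 1 < ‖x i'‖⁻¹ := by
        rw [one_lt_inv_iff₀]
        exact ⟨norm_pos_iff.mpr (hne i'), hlt i'⟩
      calc (1 : ℝ) = 1 * 1 := (one_mul 1).symm
        _ < ‖x i'‖⁻¹ * ‖c'‖ := by
            apply mul_lt_mul' (le_of_lt h1') hc' zero_le_one
            · linarith

end Quat

section Main

local notation "ℍ" => Quaternion ℝ

lemma mem_of_mem_suffList (Z : Subring ℍ) (a : ℕ → ℍ) (ha : ∀ n, 1 ≤ n → a n ∈ Z)
    {i n : ℕ} (hi : 1 ≤ i) : ∀ b ∈ suffList a i n, b ∈ Z := by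
  intro b hb
  obtain ⟨j, _, rfl⟩ := List.mem_map.mp hb
  exact ha (i + j) (by omega)

lemma q_ne_zero (Z : Subring ℍ) (hZdisc : DiscreteTopology Z)
    (a : ℕ → ℍ) (ha : ∀ n, 1 ≤ n → a n ∈ Z)
    (x : ℕ → ℍ) (hstep : ∀ n, x (n + 1) = (x n)⁻¹ - a (n + 1))
    (hne : ∀ n, x n ≠ 0) (hlt : ∀ n, ‖x n‖ < 1) :
    ∀ i n, 1 ≤ i → i ≤ n → (cfPQ (suffList a i n)).2 ≠ 0 := by
  intro i n h1 h2 h0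
  obtain ⟨i', rfl⟩ : ∃ i', i = i' + 1 := ⟨i - 1, by omega⟩
  obtain ⟨m, rfl⟩ : ∃ m, n = m + 1 := ⟨n - 1, by omega⟩
  obtain ⟨c, hq, hp, hc⟩ := key_identity a x hstep hne hlt (m - i') i' m (by omega)
  set l := suffList a (i' + 1) (m + 1) with hl
  have hlne : l ≠ [] := by
    rw [hl, suffList_cons a (show i' + 1 ≤ m + 1 by omega)]
    simp
  -- entry (1,1) of `cfN l * cfR l = 1`
  have hNR := cfN_mul_cfR l
  have hent := congrArg (fun M : Matrix (Fin 2) (Fin 2) ℍ => M 1 1) hNR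
  simp only [Matrix.mul_apply, Fin.sum_univ_two, Matrix.one_apply_eq] at hent
  rw [cfN_entries l hlne] at hent
  have e10 : (!![(cfPQ l.dropLast).1, (cfPQ l).1; (cfPQ l.dropLast).2, (cfPQ l).2]
      : Matrix (Fin 2) (Fin 2) ℍ) 1 0 = (cfPQ l.dropLast).2 := by simp
  have e11 : (!![(cfPQ l.dropLast).1, (cfPQ l).1; (cfPQ l.dropLast).2, (cfPQ l).2]
      : Matrix (Fin 2) (Fin 2) ℍ) 1 1 = (cfPQ l).2 := by simp
  rw [e10, e11, h0, zero_mul, add_zero] at hent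
  -- so γ * u = 1 with γ, u ∈ Z
  set γ := (cfPQ l.dropLast).2 with hγ
  set u := cfR l 0 1 with hu
  have hdl : l.dropLast = suffList a (i' + 1) m := by rw [hl, dropLast_suffList]
  have hγZ : γ ∈ Z := by
    rw [hγ, hdl]
    exact (cfPQ_mem Z (suffList a (i' + 1) m)
      (mem_of_mem_suffList Z a ha (by omega))).2
  have huZ : u ∈ Z := by
    rw [hu, hl]
    exact cfR_mem Z (suffList a (i' + 1) (m + 1))
      (mem_of_mem_suffList Z a ha (by omega)) 0 1
  have hune : u ≠ 0 := right_ne_zero_of_mul_eq_one hent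
  have hnorm : ‖γ‖ * ‖u‖ = 1 := by
    rw [← norm_mul, hent, norm_one]
  have hu1 : 1 ≤ ‖u‖ := discrete_norm_ge_one Z hZdisc huZ hune
  have hγle : ‖γ‖ ≤ 1 := by
    nlinarith [norm_nonneg γ, norm_nonneg u]
  -- but the key identity forces ‖γ‖ * ‖x (m+1)‖ = ‖c‖ > 1
  rw [hdl] at hγ
  have hcval : c = γ * x (m + 1) := by
    rw [← hq, h0, add_zero, ← hγ]
  have : ‖c‖ < 1 := by
    rw [hcval, norm_mul]
    calc ‖γ‖ * ‖x (m + 1)‖ ≤ 1 * ‖x (m + 1)‖ := by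
          apply mul_le_mul_of_nonneg_right hγle (norm_nonneg _)
      _ < 1 := by rw [one_mul]; exact hlt (m + 1)
  linarith

lemma prod_telescope (f : ℕ → ℝ) (hf : ∀ i, f i ≠ 0) :
    ∀ n, ∏ i ∈ Finset.range n, (f (i + 1) * (f i)⁻¹) = f n * (f 0)⁻¹ := by
  intro n
  induction n with
  | zero => simp [mul_inv_cancel₀ (hf 0)]
  | succ n ih =>
    rw [Finset.prod_range_succ, ih]
    have : f n * (f 0)⁻¹ * (f (n + 1) * (f n)⁻¹)
        = (f n * (f n)⁻¹) * (f (n + 1) * (f 0)⁻¹) := by ring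
    rw [this, mul_inv_cancel₀ (hf n), one_mul]

end Main

/-- Lemma 1.6 of the paper for the quaternions: the denominators of all suffixes
are nonzero and the product of the norms of the tail convergents equals
`‖Q[a_1,…,a_n]‖⁻¹ ≤ 1`. -/
theorem quaternion_cf_denominator_bound (Z : Subring (Quaternion ℝ))
    (hZdisc : DiscreteTopology Z)
    (a : ℕ → Quaternion ℝ) (ha : ∀ n, 1 ≤ n → a n ∈ Z)
    (x₀ : Quaternion ℝ) (x : ℕ → Quaternion ℝ) (hx0 : x 0 = x₀)
    (hstep : ∀ n, x (n + 1) = (x n)⁻¹ - a (n + 1))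
    (hne : ∀ n, x n ≠ 0) (hlt : ∀ n, ‖x n‖ < 1) :
    ∀ n, 1 ≤ n →
      (∀ i, 1 ≤ i → i ≤ n → (cfPQ (suffList a i n)).2 ≠ 0) ∧
      (∏ i ∈ Finset.range n,
          ‖(cfPQ (suffList a (i + 1) n)).1 * ((cfPQ (suffList a (i + 1) n)).2)⁻¹‖)
        = ‖(cfPQ (suffList a 1 n)).2‖⁻¹ ∧
      ‖(cfPQ (suffList a 1 n)).2‖⁻¹ ≤ 1 := by
  intro n hn
  have hQne : ∀ i, 1 ≤ i → i ≤ n → (cfPQ (suffList a i n)).2 ≠ 0 :=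
    fun i h1 h2 => q_ne_zero Z hZdisc a ha x hstep hne hlt i n h1 h2
  have hQ1 : 1 ≤ ‖(cfPQ (suffList a 1 n)).2‖ :=
    discrete_norm_ge_one Z hZdisc
      ((cfPQ_mem Z _ (mem_of_mem_suffList Z a ha le_rfl)).2)
      (hQne 1 le_rfl hn)
  refine ⟨hQne, ?_, ?_⟩
  · set f : ℕ → ℝ := fun i => ‖(cfPQ (suffList a (i + 1) n)).2‖ with hf
    have hfne : ∀ i, f i ≠ 0 := by
      intro i
      by_cases h : i + 1 ≤ n
      · exact norm_ne_zero_iff.mpr (hQne (i + 1) (by omega) h)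
      · rw [hf]
        simp only
        rw [suffList_nil a (by omega)]
        norm_num [cfPQ]
    have hterm : ∀ i ∈ Finset.range n,
        ‖(cfPQ (suffList a (i + 1) n)).1 * ((cfPQ (suffList a (i + 1) n)).2)⁻¹‖
          = f (i + 1) * (f i)⁻¹ := by
      intro i hi
      rw [Finset.mem_range] at hi
      have h1 : (cfPQ (suffList a (i + 1) n)).1 = (cfPQ (suffList a (i + 1 + 1) n)).2 := by
        rw [suffList_cons a (show i + 1 ≤ n by omega), cfPQ_cons]
      rw [norm_mul, norm_inv, h1]
    rw [Finset.prod_congr rfl hterm, prod_telescope f hfne n]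
    have hfn : f n = 1 := by
      rw [hf]
      simp only
      rw [suffList_nil a (by omega)]
      norm_num [cfPQ]
    rw [hfn, one_mul]
  · exact inv_le_one_of_one_le₀ hQ1
end
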